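/- In the polynomial ring ℂ[α,β,γ,δ], suppose f ∈ (δ²+β−2, γ^k) (the ideal generated by δ²+β−2 and γ^k) and deg f < 6k, where the grading assigns deg α = deg δ = 2, deg β = 4, deg γ = 6. Then f ∈ (δ²+β−2). -/

import Mathlib

/-!
STATEMENT 11: In `ℂ[α,β,γ,δ]` (with `α = X 0`, `β = X 1`, `γ = X 2`, `δ = X 3`),
if `f ∈ (δ²+β−2, γ^k)` and `deg f < 6k` — where the weighted grading assigns
`deg α = deg δ = 2`, `deg β = 4`, `deg γ = 6` — then `f ∈ (δ²+β−2)`.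
-/

open MvPolynomial

set_option linter.unusedSectionVars false

section helpers
variable {σ : Type*} [DecidableEq σ] (w : σ → ℕ)

lemma wtd_le_iff (p : MvPolynomial σ ℂ) (n : ℕ) :
    p.weightedTotalDegree w ≤ n ↔ ∀ d ∈ p.support, Finsupp.weight w d ≤ n :=
  Finset.sup_le_iff

lemma wtd_add_le (p q : MvPolynomial σ ℂ) :
    (p + q).weightedTotalDegree w ≤ max (p.weightedTotalDegree w) (q.weightedTotalDegree w) := by
  rw [wtd_le_iff]
  intro d hd
  rcases Finset.mem_union.mp (MvPolynomial.support_add hd) with h | h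
  · exact le_max_of_le_left (le_weightedTotalDegree w h)
  · exact le_max_of_le_right (le_weightedTotalDegree w h)

lemma wtd_mul_le (p q : MvPolynomial σ ℂ) :
    (p * q).weightedTotalDegree w ≤ p.weightedTotalDegree w + q.weightedTotalDegree w := by
  rw [wtd_le_iff]
  intro d hd
  obtain ⟨a, ha, b, hb, rfl⟩ := Finset.mem_add.mp (MvPolynomial.support_mul p q hd)
  rw [map_add]
  exact add_le_add (le_weightedTotalDegree w ha) (le_weightedTotalDegree w hb)

lemma wtd_monomial_le (d : σ →₀ ℕ) (c : ℂ) :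
    (monomial d c).weightedTotalDegree w ≤ Finsupp.weight w d := by
  rw [wtd_le_iff]
  intro e he
  classical
  rw [MvPolynomial.support_monomial] at he
  split_ifs at he with h
  · exact absurd he (Finset.notMem_empty e)
  · rw [Finset.mem_singleton] at he; subst he; exact le_rfl

lemma wtd_pow_le (p : MvPolynomial σ ℂ) (n : ℕ) :
    (p ^ n).weightedTotalDegree w ≤ n * p.weightedTotalDegree w := by
  induction n with
  | zero => simpa using wtd_monomial_le w 0 1
  | succ n ih =>
      calc (p ^ (n+1)).weightedTotalDegree w ≤ (p ^ n).weightedTotalDegree w + p.weightedTotalDegree w := by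
            rw [pow_succ]; exact wtd_mul_le w _ _
        _ ≤ n * p.weightedTotalDegree w + p.weightedTotalDegree w := Nat.add_le_add_right ih _
        _ = (n+1) * p.weightedTotalDegree w := by ring

lemma wtd_sum_le {ι : Type*} (s : Finset ι) (g : ι → MvPolynomial σ ℂ) (n : ℕ)
    (h : ∀ i ∈ s, (g i).weightedTotalDegree w ≤ n) :
    (∑ i ∈ s, g i).weightedTotalDegree w ≤ n := by
  classical
  induction s using Finset.induction with
  | empty => simp only [Finset.sum_empty, MvPolynomial.weightedTotalDegree_zero]; exact bot_le
  | insert _ _ hx ih =>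
      rw [Finset.sum_insert hx]
      refine le_trans (wtd_add_le w _ _) (max_le (h _ (Finset.mem_insert_self _ _)) ?_)
      exact ih fun i hi => h i (Finset.mem_insert_of_mem hi)

lemma wtd_aeval_le [Fintype σ] (g : σ → MvPolynomial σ ℂ)
    (hg : ∀ i, (g i).weightedTotalDegree w ≤ w i) (f : MvPolynomial σ ℂ) :
    (aeval g f).weightedTotalDegree w ≤ f.weightedTotalDegree w := by
  conv_lhs => rw [f.as_sum]
  rw [map_sum]
  refine wtd_sum_le w _ _ _ fun d hd => ?_
  refine le_trans ?_ (le_weightedTotalDegree w hd)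
  rw [aeval_monomial]
  refine le_trans (wtd_mul_le w _ _) ?_
  have hC : ((algebraMap ℂ (MvPolynomial σ ℂ)) (coeff d f)).weightedTotalDegree w ≤ 0 := by
    simpa using wtd_monomial_le w 0 (coeff d f)
  have hprod : (d.prod fun i k => g i ^ k).weightedTotalDegree w ≤ Finsupp.weight w d := by
    rw [Finsupp.prod, Finsupp.weight_apply, Finsupp.sum]
    induction d.support using Finset.induction with
    | empty => simpa using wtd_monomial_le w 0 1
    | insert _ _ hx ih =>
        rw [Finset.prod_insert hx, Finset.sum_insert hx]
        refine le_trans (wtd_mul_le w _ _) (add_le_add ?_ ih)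
        exact le_trans (wtd_pow_le w _ _) (by
          simpa [smul_eq_mul] using Nat.mul_le_mul_left _ (hg _))
  calc _ ≤ 0 + Finsupp.weight w d := add_le_add hC hprod
    _ = Finsupp.weight w d := by ring

end helpers

noncomputable def psi : MvPolynomial (Fin 4) ℂ →ₐ[ℂ] MvPolynomial (Fin 4) ℂ :=
  aeval ![X 0, 2 - X 3 ^ 2, X 2, X 3]

lemma psi_sub_mem (f : MvPolynomial (Fin 4) ℂ) :
    f - psi f ∈ Ideal.span {(X 3 : MvPolynomial (Fin 4) ℂ) ^ 2 + X 1 - 2} := by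
  set I := Ideal.span {(X 3 : MvPolynomial (Fin 4) ℂ) ^ 2 + X 1 - 2} with hI
  induction f using MvPolynomial.induction_on with
  | C a => simp [psi]
  | add p q hp hq =>
      have : p + q - psi (p + q) = (p - psi p) + (q - psi q) := by rw [map_add]; ring
      rw [this]; exact I.add_mem hp hq
  | mul_X p n hp =>
      have hXn : (X n : MvPolynomial (Fin 4) ℂ) - psi (X n) ∈ I := by
        fin_cases n
        · simp [psi]
        · show (X 1 : MvPolynomial (Fin 4) ℂ) - psi (X 1) ∈ I
          have : (X 1 : MvPolynomial (Fin 4) ℂ) - psi (X 1) = X 3 ^ 2 + X 1 - 2 := by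
            simp [psi]; ring
          rw [this]; exact Ideal.subset_span rfl
        · simp [psi]
        · simp [psi]
      have : p * X n - psi (p * X n) = (p - psi p) * X n + psi p * (X n - psi (X n)) := by
        rw [map_mul]; ring
      rw [this]
      exact I.add_mem (I.mul_mem_right _ hp) (I.mul_mem_left _ hXn)

theorem stmt11 (k : ℕ) (f : MvPolynomial (Fin 4) ℂ)
    (hf : f ∈ Ideal.span {(X 3 : MvPolynomial (Fin 4) ℂ) ^ 2 + X 1 - 2, X 2 ^ k})
    (hdeg : f.weightedTotalDegree ![2, 4, 6, 2] < 6 * k) :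
    f ∈ Ideal.span {(X 3 : MvPolynomial (Fin 4) ℂ) ^ 2 + X 1 - 2} := by
  obtain ⟨a, b, hab⟩ := Ideal.mem_span_pair.mp hf
  have hgen : psi ((X 3 : MvPolynomial (Fin 4) ℂ) ^ 2 + X 1 - 2) = 0 := by
    simp [psi, map_ofNat]
  have hX2 : psi ((X 2 : MvPolynomial (Fin 4) ℂ) ^ k) = X 2 ^ k := by simp [psi]
  have hpsif : psi f = psi b * X 2 ^ k := by
    rw [← hab]; simp [map_add, map_mul, hgen, hX2]
  have hpsi0 : psi f = 0 := by
    by_contra h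
    have hle : (psi f).weightedTotalDegree ![2, 4, 6, 2] ≤ f.weightedTotalDegree ![2, 4, 6, 2] := by
      refine wtd_aeval_le _ _ ?_ f
      intro i
      have hX : ∀ j : Fin 4, (X j : MvPolynomial (Fin 4) ℂ).weightedTotalDegree ![2,4,6,2]
          ≤ ![2,4,6,2] j := by
        intro j
        refine le_trans (wtd_monomial_le _ (Finsupp.single j 1) 1) ?_
        rw [Finsupp.weight_apply, Finsupp.sum_single_index (by simp), one_smul]
      fin_cases i
      · exact hX 0
      · show ((2 : MvPolynomial (Fin 4) ℂ) - X 3 ^ 2).weightedTotalDegree ![2,4,6,2] ≤ 4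
        have h2 : ((2 : MvPolynomial (Fin 4) ℂ)).weightedTotalDegree ![2,4,6,2] ≤ 0 := by
          have := wtd_monomial_le ![2,4,6,2] (0 : Fin 4 →₀ ℕ) (2 : ℂ)
          rw [MvPolynomial.monomial_zero', map_ofNat] at this; exact this
        have hX3 : (X 3 : MvPolynomial (Fin 4) ℂ).weightedTotalDegree ![2,4,6,2] ≤ 2 := by
          simpa using hX 3
        have h3 : ((X 3 : MvPolynomial (Fin 4) ℂ) ^ 2).weightedTotalDegree ![2,4,6,2] ≤ 4 := by
          refine le_trans (wtd_pow_le _ _ _) ?_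
          omega
        have hneg : ((-(X 3 ^ 2) : MvPolynomial (Fin 4) ℂ)).weightedTotalDegree ![2,4,6,2] ≤ 4 := by
          have hsupp : ((-(X 3 ^ 2) : MvPolynomial (Fin 4) ℂ)).support = ((X 3 ^ 2 : MvPolynomial (Fin 4) ℂ)).support :=
            MvPolynomial.support_neg _
          unfold MvPolynomial.weightedTotalDegree at h3 ⊢
          rw [hsupp]
          exact h3
        rw [sub_eq_add_neg]
        exact le_trans (wtd_add_le _ _ _) (by omega)
      · exact hX 2
      · exact hX 3
    -- lower bound: nonzero multiple of X 2 ^ k has degree ≥ 6k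
    have hlow : 6 * k ≤ (psi f).weightedTotalDegree ![2,4,6,2] := by
      rw [hpsif]
      obtain ⟨d, hd⟩ := (MvPolynomial.support_nonempty.mpr (hpsif ▸ h))
      obtain ⟨e1, he1, e2, he2, rfl⟩ := Finset.mem_add.mp (MvPolynomial.support_mul _ _ hd)
      have he2' : e2 = Finsupp.single (2 : Fin 4) k := by
        have := he2
        rw [MvPolynomial.X_pow_eq_monomial, MvPolynomial.support_monomial] at this
        simp at this
        exact this
      refine le_trans ?_ (le_weightedTotalDegree _ hd)
      have hw2 : (Finsupp.weight ![2,4,6,2]) (Finsupp.single (2 : Fin 4) k) = 6 * k := by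
        rw [Finsupp.weight_apply, Finsupp.sum_single_index (by simp)]
        simp [mul_comm]
      rw [map_add, he2', hw2]
      omega
    omega
  have := psi_sub_mem f
  rw [hpsi0, sub_zero] at this
  exact this
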